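/- Let x ∈ ℝ^{n_0} be a regular vertex, (l,j) ∈ C(x), and s, s' ∈ S^C(x) two compatible activation patterns with s_{lj} = s'_{lj}. Then the corresponding feasible axes coincide: ã_{x,s,l,j} = ã_{x,s',l,j}. -/

import Mathlib

/-!
Formalization of the setting of "Deep ReLU Programming" (Hinz & van de Geer).

A feed-forward ReLU network with `L` hidden layers and widths `n 0, …, n (L+1)`
(`n (L+1) = 1` for a real-valued network) is encoded by the structure `Net L n`
below, where `W k : Matrix (Fin (n (k+1))) (Fin (n k)) ℝ` and
`b k : Fin (n (k+1)) → ℝ` are the weight matrix and bias vector of layer `k+1`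
(so the paper's `W_l, b_l` correspond to `W (l-1), b (l-1)` here).

A neuron `(l, j)` of the paper (layer `l ∈ {1, …, L}`, neuron `j`) is encoded as
the pair `⟨k, j⟩ : Idx n` with `k = l - 1`; membership in the index set `I`
corresponds to the condition `k < L`.
-/

noncomputable section
open Metric Filter Topology
open scoped Classical RealInnerProductSpace BigOperators

namespace DRLP

/-- Input space `ℝ^{n 0}` with the Euclidean metric and inner product. -/
abbrev Input (n : ℕ → ℕ) := EuclideanSpace ℝ (Fin (n 0))

/-- Patterns: one real number for each neuron `⟨k, j⟩` (neuron `j` of layer `k+1`). -/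
abbrev Pat (n : ℕ → ℕ) := ∀ k : ℕ, Fin (n (k+1)) → ℝ

/-- Neuron indices: `⟨k, j⟩` denotes neuron `j` of layer `k+1`. -/
abbrev Idx (n : ℕ → ℕ) := Σ k : ℕ, Fin (n (k+1))

/-- `s` is an activation pattern (element of `S = {0,1}^{n_1} × ⋯ × {0,1}^{n_L}`). -/
def IsPattern (L : ℕ) {n : ℕ → ℕ} (s : Pat n) : Prop :=
  ∀ k < L, ∀ j, s k j = 0 ∨ s k j = 1

/-- Compatibility of a (hyperplane) pattern `h` with an activation pattern `s`:
`h_{lj} (s_{lj} - 0.5) ≥ 0` for all neurons `(l,j) ∈ I`. -/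
def PatCompatible (L : ℕ) {n : ℕ → ℕ} (h s : Pat n) : Prop :=
  ∀ k < L, ∀ j, h k j * (s k j - 1/2) ≥ 0

/-- A feed-forward ReLU network with `L` hidden layers and widths `n 0, …, n (L+1)`. -/
structure Net (L : ℕ) (n : ℕ → ℕ) : Type where
  W : ∀ k : ℕ, Matrix (Fin (n (k+1))) (Fin (n k)) ℝ
  b : ∀ k : ℕ, Fin (n (k+1)) → ℝ

namespace Net

variable {L : ℕ} {n : ℕ → ℕ} (N : Net L n)

/-- Output of layer `k` (entrywise ReLU applied); layer `0` is the input itself. -/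
def hid (x : Input n) : (k : ℕ) → Fin (n k) → ℝ
  | 0 => fun i => x i
  | k + 1 => fun j => max ((N.W k).mulVec (hid x k) j + N.b k j) 0

/-- The ReLU arguments `A(x)`: pre-activation of neuron `j` in layer `k+1`. -/
def preact (x : Input n) (k : ℕ) (j : Fin (n (k+1))) : ℝ :=
  (N.W k).mulVec (N.hid x k) j + N.b k j

/-- The hyperplane pattern `H(x) = sign.(A(x))`. -/
def Hpat (x : Input n) (k : ℕ) (j : Fin (n (k+1))) : ℝ :=
  Real.sign (N.preact x k j)

/-- Subjective hidden layers: activations frozen to the pattern `s`. -/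
def shid (s : Pat n) (x : Input n) : (k : ℕ) → Fin (n k) → ℝ
  | 0 => fun i => x i
  | k + 1 => fun j => s k j * ((N.W k).mulVec (shid s x k) j + N.b k j)

/-- The subjective ReLU arguments `Ã_s(x)`. -/
def spreact (s : Pat n) (x : Input n) (k : ℕ) (j : Fin (n (k+1))) : ℝ :=
  (N.W k).mulVec (N.shid s x k) j + N.b k j

/-- The subjective hyperplane pattern `H̃_s(x) = sign.(Ã_s(x))`. -/
def sHpat (s : Pat n) (x : Input n) (k : ℕ) (j : Fin (n (k+1))) : ℝ :=
  Real.sign (N.spreact s x k j)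

/-- `S^C(x)`: activation patterns compatible with the hyperplane pattern `H(x)`. -/
def SC (x : Input n) : Set (Pat n) :=
  {s | IsPattern L s ∧ PatCompatible L (N.Hpat x) s}

/-- `S̃^C(x)`: activation patterns compatible with their own induced subjective
hyperplane pattern `H̃_s(x)`. -/
def SCtilde (x : Input n) : Set (Pat n) :=
  {s | IsPattern L s ∧ PatCompatible L (N.sHpat s x) s}

/-- `C(x)`: critical indices, i.e. neurons whose hyperplane pattern is non-constant in
every neighbourhood of `x`. -/
def Critical (x : Input n) (p : Idx n) : Prop :=
  p.1 < L ∧ ∀ ε > 0, ∃ y z : Input n, dist y x < ε ∧ dist z x < ε ∧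
    N.Hpat y p.1 p.2 ≠ N.Hpat z p.1 p.2

/-- `C̃_s(x)`: subjective critical indices. -/
def sCritical (s : Pat n) (x : Input n) (p : Idx n) : Prop :=
  p.1 < L ∧ ∀ ε > 0, ∃ y z : Input n, dist y x < ε ∧ dist z x < ε ∧
    N.sHpat s y p.1 p.2 ≠ N.sHpat s z p.1 p.2

/-- The critical kernel `Ker^C(x)`. -/
def KerC (x : Input n) : Set (Input n) :=
  {v | ∃ ε > 0, ∀ t : ℝ, |t| < ε → ∀ p : Idx n, p.1 < L →
    N.Hpat (x + t • v) p.1 p.2 = N.Hpat x p.1 p.2}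

/-- The subjective critical kernel `K̃er^C_s(x)`. -/
def sKerC (s : Pat n) (x : Input n) : Set (Input n) :=
  {v | ∃ ε > 0, ∀ t : ℝ, |t| < ε → ∀ p : Idx n, p.1 < L →
    N.sHpat s (x + t • v) p.1 p.2 = N.sHpat s x p.1 p.2}

/-- Critical degrees of freedom `df^C(x) = dim Ker^C(x)`. -/
def dfC (x : Input n) : ℕ :=
  Module.finrank ℝ (Submodule.span ℝ (N.KerC x))

/-- `x` is a vertex iff `df^C(x) = 0`. -/
def IsVertex (x : Input n) : Prop := N.dfC x = 0

/-- The matrix `W_{k+1} diag(s_k) W_k ⋯ diag(s_1) W_1`. -/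
def sMat (s : Pat n) : (k : ℕ) → Matrix (Fin (n (k+1))) (Fin (n 0)) ℝ
  | 0 => N.W 0
  | k + 1 => N.W (k+1) * Matrix.diagonal (s k) * sMat s k

/-- The normal vector `ṽ_{s,l,j}` (transpose of the `j`-th row of
`W_l diag(s_{l-1}) ⋯ diag(s_1) W_1`). -/
def nvec (s : Pat n) (p : Idx n) : Input n :=
  WithLp.toLp 2 (fun i => N.sMat s p.1 p.2 i)

/-- The oriented normal vector `ũ_{s,l,j}`. -/
def onvec (s : Pat n) (p : Idx n) : Input n :=
  if s p.1 p.2 = 1 then N.nvec s p else -N.nvec s p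

/-- The gradient `∇_s = (W_{L+1} diag(s_L) ⋯ diag(s_1) W_1)ᵀ ∈ ℝ^{n_0}`. -/
def grad (h1 : n (L+1) = 1) (s : Pat n) : Input n :=
  N.nvec s ⟨L, Fin.cast h1.symm 0⟩

/-- The (real-valued) network function `f`. -/
def fnet (h1 : n (L+1) = 1) (x : Input n) : ℝ :=
  N.preact x L (Fin.cast h1.symm 0)

/-- The subjective network function `f̃_s`. -/
def sfnet (h1 : n (L+1) = 1) (s : Pat n) (x : Input n) : ℝ :=
  N.spreact s x L (Fin.cast h1.symm 0)

/-- The feasible directions `D̃_s(x)`. -/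
def Dfeas (s : Pat n) (x : Input n) : Set (Input n) :=
  {v | ∃ ε > 0, s ∈ N.SC (x + ε • v)}

/-- `x` is a regular point: for every compatible activation pattern `s ∈ S^C(x)`, the
normal vectors at the subjective critical indices are linearly independent. -/
def RegularPoint (x : Input n) : Prop :=
  ∀ s ∈ N.SC x, LinearIndependent ℝ
    (fun p : {p : Idx n // N.sCritical s x p} => N.nvec s p.1)

/-- The network is regular if every point is a regular point. -/
def Regular : Prop := ∀ x : Input n, N.RegularPoint x

/-- `w` is the feasible axis `ã_{x,s,l,j}` at `x` for the activation pattern `s` and the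
critical index `p = (l,j)`: it pairs to `1` with the oriented normal vector of `p` and
to `0` with the oriented normal vectors of all other critical indices of `x`. -/
def IsAxis (x : Input n) (s : Pat n) (p : Idx n) (w : Input n) : Prop :=
  ∀ q : Idx n, N.Critical x q → ⟪w, N.onvec s q⟫ = if p = q then 1 else 0

/-- The region separating axes `𝒜(x)`. -/
def RegionSepAxes (x : Input n) : Set (Input n) :=
  {w | ∃ s ∈ N.SC x, ∃ p : Idx n, N.Critical x p ∧ N.IsAxis x s p w}


-- ### Auxiliary lemmas

lemma continuous_hid (k : ℕ) : ∀ i, Continuous fun y : Input n => N.hid y k i := by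
  induction k with
  | zero => exact fun i => (EuclideanSpace.proj i).continuous
  | succ k ih =>
    intro j
    have : Continuous fun y : Input n => (N.W k).mulVec (N.hid y k) j + N.b k j := by
      simp only [Matrix.mulVec, dotProduct]
      exact (continuous_finset_sum _ fun i _ => (continuous_const.mul (ih i))).add
        continuous_const
    exact this.max continuous_const

lemma continuous_preact (k : ℕ) (j : Fin (n (k+1))) :
    Continuous fun y : Input n => N.preact y k j := by
  simp only [preact, Matrix.mulVec, dotProduct]
  exact (continuous_finset_sum _ fun i _ =>
    (continuous_const.mul (N.continuous_hid k i))).add continuous_const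

/-- Critical neurons have vanishing preactivation. -/
lemma preact_eq_zero_of_critical {x : Input n} {q : Idx n} (h : N.Critical x q) :
    N.preact x q.1 q.2 = 0 := by
  by_contra hne
  have hcont := (N.continuous_preact q.1 q.2).continuousAt (x := x)
  have hev : ∀ᶠ y in 𝓝 x, N.Hpat y q.1 q.2 = N.Hpat x q.1 q.2 := by
    rcases lt_or_gt_of_ne hne with hlt | hlt
    · filter_upwards [hcont.eventually (eventually_lt_nhds hlt)] with y hy
      rw [Hpat, Hpat, Real.sign_of_neg hy, Real.sign_of_neg hlt]
    · filter_upwards [hcont.eventually (eventually_gt_nhds hlt)] with y hy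
      rw [Hpat, Hpat, Real.sign_of_pos hy, Real.sign_of_pos hlt]
  rw [Metric.eventually_nhds_iff] at hev
  obtain ⟨ε, hε, hb⟩ := hev
  obtain ⟨y, z, hy, hz, hne'⟩ := h.2 ε hε
  exact hne' ((hb hy).trans (hb hz).symm)

/-- For a compatible pattern, the true and subjective hidden layers agree at `x`. -/
lemma hid_eq_shid {s : Pat n} {x : Input n} (hs : s ∈ N.SC x) :
    ∀ k, k ≤ L → ∀ i, N.hid x k i = N.shid s x k i := by
  intro k
  induction k with
  | zero => intro _ i; rfl
  | succ k ih =>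
    intro hk j
    have hkL : k < L := hk
    have hhid : N.hid x k = N.shid s x k := funext (ih hkL.le)
    have hpre : N.preact x k j = N.spreact s x k j := by
      simp only [preact, spreact, hhid]
    show max ((N.W k).mulVec (N.hid x k) j + N.b k j) 0 = _
    rw [show (N.W k).mulVec (N.hid x k) j + N.b k j = N.preact x k j from rfl]
    show _ = s k j * ((N.W k).mulVec (N.shid s x k) j + N.b k j)
    rw [show (N.W k).mulVec (N.shid s x k) j + N.b k j = N.spreact s x k j from rfl, ← hpre]
    rcases lt_trichotomy (N.preact x k j) 0 with hlt | heq | hgt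
    · have hsign : N.Hpat x k j = -1 := Real.sign_of_neg hlt
      have hcomp := hs.2 k hkL j
      rcases hs.1 k hkL j with h0 | h1
      · rw [h0, max_eq_right hlt.le, zero_mul]
      · exfalso; rw [hsign, h1] at hcomp; norm_num at hcomp
    · rw [heq, max_eq_right le_rfl, mul_zero]
    · have hsign : N.Hpat x k j = 1 := Real.sign_of_pos hgt
      have hcomp := hs.2 k hkL j
      rcases hs.1 k hkL j with h0 | h1
      · exfalso; rw [hsign, h0] at hcomp; norm_num at hcomp
      · rw [h1, max_eq_left hgt.le, one_mul]

/-- The subjective preactivations are affine with linear part `sMat`. -/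
lemma spreact_add (s : Pat n) (x v : Input n) :
    ∀ k, ∀ j, N.spreact s (x + v) k j
      = N.spreact s x k j + (N.sMat s k).mulVec (fun i => v i) j := by
  have key : ∀ k, ∀ j : Fin (n (k+1)),
      (N.spreact s (x + v) k j = N.spreact s x k j + (N.sMat s k).mulVec (fun i => v i) j)
      ∧ (N.shid s (x + v) (k+1) j
          = N.shid s x (k+1) j + s k j * (N.sMat s k).mulVec (fun i => v i) j) := by
    intro k
    induction k with
    | zero =>
      intro j
      have h1 : N.spreact s (x + v) 0 j
          = N.spreact s x 0 j + (N.sMat s 0).mulVec (fun i => v i) j := by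
        simp only [spreact, shid, sMat, Matrix.mulVec, dotProduct]
        simp only [PiLp.add_apply, mul_add, Finset.sum_add_distrib]
        ring
      refine ⟨h1, ?_⟩
      show s 0 j * N.spreact s (x+v) 0 j = s 0 j * N.spreact s x 0 j + _
      rw [h1]; ring
    | succ k ih =>
      intro j
      have h1 : N.spreact s (x + v) (k+1) j
          = N.spreact s x (k+1) j + (N.sMat s (k+1)).mulVec (fun i => v i) j := by
        show (N.W (k+1)).mulVec (N.shid s (x+v) (k+1)) j + N.b (k+1) j = _
        have hsh : N.shid s (x+v) (k+1) = fun i => N.shid s x (k+1) i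
            + s k i * (N.sMat s k).mulVec (fun i => v i) i := funext fun i => (ih i).2
        rw [hsh]
        show ∑ i, N.W (k+1) j i * (N.shid s x (k+1) i
          + s k i * (N.sMat s k).mulVec (fun i => v i) i) + N.b (k+1) j = _
        rw [show N.sMat s (k+1) = (N.W (k+1) * Matrix.diagonal (s k)) * N.sMat s k from rfl,
          ← Matrix.mulVec_mulVec]
        simp only [spreact, Matrix.mulVec, dotProduct, Matrix.mul_diagonal, mul_add,
          Finset.sum_add_distrib, mul_assoc]
        ring
      refine ⟨h1, ?_⟩
      show s (k+1) j * N.spreact s (x+v) (k+1) j = s (k+1) j * N.spreact s x (k+1) j + _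
      rw [h1]; ring
  exact fun k j => (key k j).1

lemma inner_nvec (s : Pat n) (v : Input n) (k : ℕ) (j : Fin (n (k+1))) :
    ⟪v, N.nvec s ⟨k, j⟩⟫ = (N.sMat s k).mulVec (fun i => v i) j := by
  simp only [PiLp.inner_apply, RCLike.inner_apply, starRingEnd_apply, star_trivial, nvec,
    Matrix.mulVec, dotProduct]

lemma spreact_smul_add (s : Pat n) (x v : Input n) (t : ℝ) (k : ℕ) (j : Fin (n (k+1))) :
    N.spreact s (x + t • v) k j = N.spreact s x k j + t * ⟪v, N.nvec s ⟨k, j⟩⟫ := by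
  rw [N.spreact_add s x (t • v) k j, N.inner_nvec]
  congr 1
  simp only [Matrix.mulVec, dotProduct, PiLp.smul_apply, smul_eq_mul, Finset.mul_sum]
  exact Finset.sum_congr rfl fun i _ => by ring

/-- Key induction: moving from `x` in a direction whose pairings with the critical
normal vectors are sign-compatible with both `s` and `s'`, the true network follows
both subjective networks. -/
lemma key {s s' : Pat n} {x : Input n} (hs : s ∈ N.SC x) (hs' : s' ∈ N.SC x)
    (v : Input n) (t ε : ℝ)
    (hball : ∀ q : Idx n, q.1 < L → ¬ N.Critical x q → ∀ y : Input n, dist y x < ε →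
      N.Hpat y q.1 q.2 = N.Hpat x q.1 q.2)
    (ht : dist (x + t • v) x < ε)
    (hsign : ∀ q : Idx n, q.1 < L → N.Critical x q →
      0 ≤ t * ⟪v, N.nvec s q⟫ * (2 * s q.1 q.2 - 1) ∧
      0 ≤ t * ⟪v, N.nvec s q⟫ * (2 * s' q.1 q.2 - 1)) :
    ∀ k, k ≤ L → ∀ i, N.hid (x + t • v) k i = N.shid s (x + t • v) k i ∧
      N.hid (x + t • v) k i = N.shid s' (x + t • v) k i := by
  intro k
  induction k with
  | zero => exact fun _ i => ⟨rfl, rfl⟩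
  | succ k ih =>
    intro hk j
    have hkL : k < L := hk
    have ihs : N.shid s (x + t • v) k = N.hid (x + t • v) k :=
      funext fun i => ((ih hkL.le i).1).symm
    have ihs' : N.shid s' (x + t • v) k = N.hid (x + t • v) k :=
      funext fun i => ((ih hkL.le i).2).symm
    set a : ℝ := N.preact (x + t • v) k j with ha_def
    have has : N.spreact s (x + t • v) k j = a := by
      simp only [spreact, preact, ihs, ha_def]
    have has' : N.spreact s' (x + t • v) k j = a := by
      simp only [spreact, preact, ihs', ha_def]
    have hpre : a = N.preact x k j + t * ⟪v, N.nvec s ⟨k, j⟩⟫ := by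
      rw [← has, N.spreact_smul_add]
      congr 1
      have e : N.shid s x k = N.hid x k := funext fun i => (N.hid_eq_shid hs k hkL.le i).symm
      simp only [spreact, preact, e]
    have main : ∀ σ : Pat n, σ ∈ N.SC x →
        (N.Critical x ⟨k, j⟩ → 0 ≤ t * ⟪v, N.nvec s ⟨k, j⟩⟫ * (2 * σ k j - 1)) →
        max a 0 = σ k j * a := by
      intro σ hσ hsg
      by_cases hcrit : N.Critical x ⟨k, j⟩
      · have hz : N.preact x k j = 0 := N.preact_eq_zero_of_critical hcrit
        have ha : a = t * ⟪v, N.nvec s ⟨k, j⟩⟫ := by rw [hpre, hz, zero_add]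
        have hsg' := hsg hcrit
        rcases hσ.1 k hkL j with h0 | h1
        · rw [h0, zero_mul]
          refine max_eq_right ?_
          rw [h0] at hsg'; rw [ha]; nlinarith
        · rw [h1, one_mul]
          refine max_eq_left ?_
          rw [h1] at hsg'; rw [ha]; nlinarith
      · have hHeq : N.Hpat (x + t • v) k j = N.Hpat x k j := hball ⟨k, j⟩ hkL hcrit _ ht
        rcases lt_trichotomy a 0 with hlt | heq | hgt
        · have h1 : N.Hpat x k j = -1 := by
            rw [← hHeq]; exact Real.sign_of_neg hlt
          have hcomp := hσ.2 k hkL j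
          rcases hσ.1 k hkL j with h0 | h1'
          · rw [h0, zero_mul]; exact max_eq_right hlt.le
          · exfalso; rw [h1, h1'] at hcomp; norm_num at hcomp
        · rw [heq, mul_zero]; simp
        · have h1 : N.Hpat x k j = 1 := by
            rw [← hHeq]; exact Real.sign_of_pos hgt
          have hcomp := hσ.2 k hkL j
          rcases hσ.1 k hkL j with h0 | h1'
          · exfalso; rw [h1, h0] at hcomp; norm_num at hcomp
          · rw [h1', one_mul]; exact max_eq_left hgt.le
    constructor
    · show max ((N.W k).mulVec (N.hid (x + t • v) k) j + N.b k j) 0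
        = s k j * ((N.W k).mulVec (N.shid s (x + t • v) k) j + N.b k j)
      rw [show (N.W k).mulVec (N.hid (x + t • v) k) j + N.b k j = a from rfl,
        show (N.W k).mulVec (N.shid s (x + t • v) k) j + N.b k j
          = N.spreact s (x + t • v) k j from rfl, has]
      exact main s hs fun hc => (hsign ⟨k, j⟩ hkL hc).1
    · show max ((N.W k).mulVec (N.hid (x + t • v) k) j + N.b k j) 0
        = s' k j * ((N.W k).mulVec (N.shid s' (x + t • v) k) j + N.b k j)
      rw [show (N.W k).mulVec (N.hid (x + t • v) k) j + N.b k j = a from rfl,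
        show (N.W k).mulVec (N.shid s' (x + t • v) k) j + N.b k j
          = N.spreact s' (x + t • v) k j from rfl, has']
      exact main s' hs' fun hc => (hsign ⟨k, j⟩ hkL hc).2

/-- Non-critical neurons have a common radius of pattern constancy. -/
lemma noncrit_ball (x : Input n) : ∃ ε > 0, ∀ q : Idx n, q.1 < L → ¬ N.Critical x q →
    ∀ y : Input n, dist y x < ε → N.Hpat y q.1 q.2 = N.Hpat x q.1 q.2 := by
  classical
  set F : Finset (Idx n) := (Finset.range L).sigma (fun k => Finset.univ) with hF
  have hq : ∀ q ∈ F, ∀ᶠ y in 𝓝 x,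
      ¬ N.Critical x q → N.Hpat y q.1 q.2 = N.Hpat x q.1 q.2 := by
    intro q hqF
    have hqL : q.1 < L := by
      have := Finset.mem_sigma.mp hqF
      exact Finset.mem_range.mp this.1
    by_cases hcrit : N.Critical x q
    · exact Eventually.of_forall fun y h => absurd hcrit h
    · rw [Critical, not_and] at hcrit
      have h2 := hcrit hqL
      push_neg at h2
      obtain ⟨ε, hε, hc⟩ := h2
      rw [Metric.eventually_nhds_iff]
      exact ⟨ε, hε, fun {y} hy _ => hc y x hy (by simpa using hε)⟩
  have hev : ∀ᶠ y in 𝓝 x, ∀ q ∈ F,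
      ¬ N.Critical x q → N.Hpat y q.1 q.2 = N.Hpat x q.1 q.2 :=
    (Filter.eventually_all_finset F).mpr hq
  rw [Metric.eventually_nhds_iff] at hev
  obtain ⟨ε, hε, h⟩ := hev
  refine ⟨ε, hε, fun q hqL hnc y hy => h hy q ?_ hnc⟩
  exact Finset.mem_sigma.mpr ⟨Finset.mem_range.mpr hqL, Finset.mem_univ _⟩

end Net

/-- Theorem 3: let `x` be a regular vertex, `(l,j) ∈ C(x)` and
`s, s' ∈ S^C(x)` with `s_{lj} = s'_{lj}`. Then the corresponding feasible axes coincide: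
`ã_{x,s,l,j} = ã_{x,s',l,j}`. -/
theorem statement15 {L : ℕ} {n : ℕ → ℕ} (N : Net L n) (x : Input n)
    (hreg : N.RegularPoint x) (hvx : N.IsVertex x) (p : Idx n) (hp : N.Critical x p)
    (s s' : Pat n) (hs : s ∈ N.SC x) (hs' : s' ∈ N.SC x) (hss' : s p.1 p.2 = s' p.1 p.2)
    (w w' : Input n) (hw : N.IsAxis x s p w) (hw' : N.IsAxis x s' p w') :
    w = w' := by
  classical
  obtain ⟨ε, hε, hball⟩ := N.noncrit_ball x
  have hpL : p.1 < L := hp.1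
  -- inner products of w with the s-normal vectors at critical indices
  have hwn : ∀ q : Idx n, N.Critical x q →
      ⟪w, N.nvec s q⟫ = (if s q.1 q.2 = 1 then (1:ℝ) else -1) * (if p = q then 1 else 0) := by
    intro q hq
    have hwq := hw q hq
    by_cases h1 : s q.1 q.2 = 1
    · rw [if_pos h1]; rw [Net.onvec, if_pos h1] at hwq; rw [hwq, one_mul]
    · rw [if_neg h1]; rw [Net.onvec, if_neg h1, inner_neg_right] at hwq
      rw [show ⟪w, N.nvec s q⟫ = -(-⟪w, N.nvec s q⟫) by ring, hwq]; ring
  -- Step A: w is an axis for s' as well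
  set t : ℝ := ε / (‖w‖ + 1) with ht_def
  have htpos : 0 < t := div_pos hε (by positivity)
  have hdist : dist (x + t • w) x < ε := by
    rw [dist_self_add_left, norm_smul, Real.norm_eq_abs, abs_of_pos htpos]
    calc t * ‖w‖ < t * (‖w‖ + 1) := by
          exact mul_lt_mul_of_pos_left (lt_add_one _) htpos
      _ = ε := by rw [ht_def]; field_simp
  have hsign : ∀ q : Idx n, q.1 < L → N.Critical x q →
      0 ≤ t * ⟪w, N.nvec s q⟫ * (2 * s q.1 q.2 - 1) ∧
      0 ≤ t * ⟪w, N.nvec s q⟫ * (2 * s' q.1 q.2 - 1) := by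
    intro q hqL hq
    rw [hwn q hq]
    by_cases hpq : p = q
    · subst hpq
      rw [if_pos rfl, mul_one, ← hss']
      rcases hs.1 p.1 hpL p.2 with h0 | h1
      · rw [h0, if_neg (by norm_num)]
        constructor <;> nlinarith
      · rw [h1, if_pos rfl]
        constructor <;> nlinarith
    · rw [if_neg hpq]
      constructor <;> simp
  have hkey := N.key hs hs' w t ε hball hdist hsign
  have hinner : ∀ q : Idx n, N.Critical x q → ⟪w, N.nvec s' q⟫ = ⟪w, N.nvec s q⟫ := by
    intro q hq
    have hqL := hq.1
    have e1 : N.shid s (x + t • w) q.1 = N.hid (x + t • w) q.1 :=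
      funext fun i => ((hkey q.1 hqL.le i).1).symm
    have e1' : N.shid s' (x + t • w) q.1 = N.hid (x + t • w) q.1 :=
      funext fun i => ((hkey q.1 hqL.le i).2).symm
    have e2 : N.shid s x q.1 = N.hid x q.1 :=
      funext fun i => (N.hid_eq_shid hs q.1 hqL.le i).symm
    have e2' : N.shid s' x q.1 = N.hid x q.1 :=
      funext fun i => (N.hid_eq_shid hs' q.1 hqL.le i).symm
    have h3 := N.spreact_smul_add s x w t q.1 q.2
    have h3' := N.spreact_smul_add s' x w t q.1 q.2
    simp only [Net.spreact, Net.preact, e1, e1', e2, e2'] at h3 h3'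
    have : t * ⟪w, N.nvec s' ⟨q.1, q.2⟩⟫ = t * ⟪w, N.nvec s ⟨q.1, q.2⟩⟫ := by linarith
    have := mul_left_cancel₀ (ne_of_gt htpos) this
    simpa using this
  have haxis' : N.IsAxis x s' p w := by
    intro q hq
    have hq' := hinner q hq
    rw [hwn q hq] at hq'
    by_cases hpq : p = q
    · subst hpq
      rw [if_pos rfl, mul_one] at hq'
      rw [if_pos rfl, Net.onvec]
      by_cases h1' : s' p.1 p.2 = 1
      · rw [if_pos h1', hq', if_pos (hss'.trans h1')]
      · rw [if_neg h1', inner_neg_right, hq', if_neg (fun h => h1' (hss'.symm.trans h))]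
        norm_num
    · rw [if_neg hpq, mul_zero] at hq'
      rw [if_neg hpq, Net.onvec]
      by_cases h1' : s' q.1 q.2 = 1
      · rw [if_pos h1']; exact hq'
      · rw [if_neg h1', inner_neg_right, hq', neg_zero]
  -- Step B: u := w - w' lies in the critical kernel, hence is zero
  set u : Input n := w - w' with hu_def
  have hzero : ∀ q : Idx n, N.Critical x q → ⟪u, N.nvec s' q⟫ = 0 := by
    intro q hq
    have h1 := haxis' q hq
    have h2 := hw' q hq
    have h3 : ⟪w, N.onvec s' q⟫ - ⟪w', N.onvec s' q⟫ = 0 := by rw [h1, h2]; ring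
    rw [← inner_sub_left] at h3
    rw [Net.onvec] at h3
    by_cases h1' : s' q.1 q.2 = 1
    · rw [if_pos h1'] at h3; exact h3
    · rw [if_neg h1', inner_neg_right, neg_eq_zero] at h3; exact h3
  have hker : u ∈ N.KerC x := by
    refine ⟨ε / (‖u‖ + 1), div_pos hε (by positivity), ?_⟩
    intro t0 ht0 q hqL
    have hdist0 : dist (x + t0 • u) x < ε := by
      rw [dist_self_add_left, norm_smul, Real.norm_eq_abs]
      calc |t0| * ‖u‖ ≤ |t0| * (‖u‖ + 1) := by
            exact mul_le_mul_of_nonneg_left (by linarith) (abs_nonneg _)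
        _ < (ε / (‖u‖ + 1)) * (‖u‖ + 1) := by
            exact mul_lt_mul_of_pos_right ht0 (by positivity)
        _ = ε := by field_simp
    have hkey0 := N.key hs' hs' u t0 ε hball hdist0
      (fun q hqL hcrit => by rw [hzero q hcrit]; norm_num)
    by_cases hcrit : N.Critical x q
    · have e1 : N.shid s' (x + t0 • u) q.1 = N.hid (x + t0 • u) q.1 :=
        funext fun i => ((hkey0 q.1 hqL.le i).1).symm
      have e2 : N.shid s' x q.1 = N.hid x q.1 :=
        funext fun i => (N.hid_eq_shid hs' q.1 hqL.le i).symm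
      have h3 := N.spreact_smul_add s' x u t0 q.1 q.2
      simp only [Net.spreact, Net.preact, e1, e2] at h3
      have hz : N.preact x q.1 q.2 = 0 := N.preact_eq_zero_of_critical hcrit
      have hz0 : ⟪u, N.nvec s' ⟨q.1, q.2⟩⟫ = 0 := hzero ⟨q.1, q.2⟩ hcrit
      have : N.preact (x + t0 • u) q.1 q.2 = 0 := by
        rw [Net.preact] at hz ⊢; rw [h3, hz0, hz]; ring
      rw [Net.Hpat, Net.Hpat, this, N.preact_eq_zero_of_critical hcrit]
    · exact hball q hqL hcrit _ hdist0
  have hu0 : u = 0 := by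
    have h0 : Submodule.span ℝ (N.KerC x) = ⊥ := Submodule.finrank_eq_zero.mp hvx
    have hmem := Submodule.subset_span (R := ℝ) hker
    rw [h0] at hmem
    simpa using hmem
  exact sub_eq_zero.mp hu0


end DRLP
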